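/- Let n ≥ 1, N ≥ 1, and let g₁, …, g_N and h₁, …, h_N be elements of the unitary group U(n). Then d(g₁g₂⋯g_N, h₁h₂⋯h_N) ≤ Σᵢ d(gᵢ, hᵢ), where d(g, h) := √(1 − |tr(g* h)|/n). In particular, if d(gᵢ, hᵢ) ≤ ε for every i, then d(g₁⋯g_N, h₁⋯h_N) ≤ N·ε. -/

import Mathlib

/-- The bi-invariant distance `d(g,h) = √(1 − |tr(g*·h)|/n)` on the unitary
group `U(n)`. -/
noncomputable def udist (n : ℕ) (g h : Matrix.unitaryGroup (Fin n) ℂ) : ℝ :=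
  Real.sqrt (1 - ‖
    (Matrix.trace (star (g : Matrix (Fin n) (Fin n) ℂ) *
      (h : Matrix (Fin n) (Fin n) ℂ)))‖ / n)

namespace UdistAux

noncomputable def emb (n : ℕ) (A : Matrix (Fin n) (Fin n) ℂ) :
    EuclideanSpace ℂ (Fin n × Fin n) := WithLp.toLp 2 (fun p : Fin n × Fin n => A p.1 p.2)

lemma emb_sub (n : ℕ) (A B : Matrix (Fin n) (Fin n) ℂ) :
    emb n (A - B) = emb n A - emb n B := rfl

lemma inner_emb (n : ℕ) (A B : Matrix (Fin n) (Fin n) ℂ) :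
    (inner ℂ (emb n A) (emb n B) : ℂ) = Matrix.trace (star A * B) := by
  simp [PiLp.inner_apply, emb, Matrix.trace, Matrix.mul_apply, Matrix.diag,
    Matrix.conjTranspose_apply, Fintype.sum_prod_type, mul_comm,
    Matrix.star_eq_conjTranspose]
  rw [Finset.sum_comm]

variable {n : ℕ}

lemma norm_emb_sq (g : Matrix.unitaryGroup (Fin n) ℂ) :
    ‖emb n (g : Matrix (Fin n) (Fin n) ℂ)‖ ^ 2 = n := by
  have := inner_emb n (g : Matrix (Fin n) (Fin n) ℂ) g
  rw [Matrix.UnitaryGroup.star_mul_self, Matrix.trace_one] at this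
  have h2 := inner_self_eq_norm_sq (𝕜 := ℂ) (emb n (g : Matrix (Fin n) (Fin n) ℂ))
  rw [this] at h2
  simpa using h2.symm

/-- squared norm of `emb g − λ • emb h` -/
lemma norm_diff_sq (g h : Matrix.unitaryGroup (Fin n) ℂ) (l : ℂ) (hl : ‖l‖ = 1) :
    ‖emb n (g : Matrix (Fin n) (Fin n) ℂ) - l • emb n (h : Matrix (Fin n) (Fin n) ℂ)‖ ^ 2
      = 2 * n - 2 * (l * Matrix.trace (star (g : Matrix (Fin n) (Fin n) ℂ)
        * (h : Matrix (Fin n) (Fin n) ℂ))).re := by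
  rw [@norm_sub_sq ℂ]
  rw [inner_smul_right, inner_emb, norm_smul, norm_emb_sq]
  have : ‖l‖ = 1 := hl
  rw [this, one_mul, norm_emb_sq]
  simp [RCLike.re_to_complex]
  ring

lemma exists_phase (z : ℂ) : ∃ l : ℂ, ‖l‖ = 1 ∧ l * z = (‖z‖ : ℂ) := by
  by_cases hz : z = 0
  · exact ⟨1, by simp [hz]⟩
  · refine ⟨(starRingEnd ℂ) z / ‖z‖, ?_, ?_⟩
    · simp [norm_div, Complex.norm_conj, div_self, norm_ne_zero_iff.mpr hz]
    · have hz' : (‖z‖ : ℂ) ≠ 0 := by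
        exact_mod_cast norm_ne_zero_iff.mpr hz
      field_simp
      rw [mul_comm, Complex.mul_conj, ← Complex.sq_norm]
      push_cast
      ring

noncomputable def trd (g h : Matrix.unitaryGroup (Fin n) ℂ) : ℂ :=
  Matrix.trace (star (g : Matrix (Fin n) (Fin n) ℂ) * (h : Matrix (Fin n) (Fin n) ℂ))

lemma udist_eq (g h : Matrix.unitaryGroup (Fin n) ℂ) :
    udist n g h = Real.sqrt (1 - ‖trd g h‖ / n) := rfl

lemma sqrt_bridge (hn : 1 ≤ n) (g h : Matrix.unitaryGroup (Fin n) ℂ) :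
    Real.sqrt (2 * n - 2 * ‖trd g h‖) = Real.sqrt (2 * n) * udist n g h := by
  rw [udist_eq, ← Real.sqrt_mul (by positivity)]
  congr 1
  have hn' : (n : ℝ) ≠ 0 := by positivity
  field_simp

lemma udist_triangle (hn : 1 ≤ n) (g h k : Matrix.unitaryGroup (Fin n) ℂ) :
    udist n g k ≤ udist n g h + udist n h k := by
  obtain ⟨l, hl1, hl2⟩ := exists_phase (trd g h)
  obtain ⟨m, hm1, hm2⟩ := exists_phase (trd h k)
  set x := emb n (g : Matrix (Fin n) (Fin n) ℂ) with hx
  set y := emb n (h : Matrix (Fin n) (Fin n) ℂ) with hy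
  set z := emb n (k : Matrix (Fin n) (Fin n) ℂ) with hz
  have h1 : ‖x - l • y‖ ^ 2 = 2 * n - 2 * ‖trd g h‖ := by
    rw [hx, hy, norm_diff_sq g h l hl1]
    rw [show l * Matrix.trace (star (g : Matrix (Fin n) (Fin n) ℂ)
      * (h : Matrix (Fin n) (Fin n) ℂ)) = ((‖trd g h‖ : ℝ) : ℂ) from hl2]
    simp
  have h2 : ‖y - m • z‖ ^ 2 = 2 * n - 2 * ‖trd h k‖ := by
    rw [hy, hz, norm_diff_sq h k m hm1]
    rw [show m * Matrix.trace (star (h : Matrix (Fin n) (Fin n) ℂ)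
      * (k : Matrix (Fin n) (Fin n) ℂ)) = ((‖trd h k‖ : ℝ) : ℂ) from hm2]
    simp
  have h3 : 2 * n - 2 * ‖trd g k‖ ≤ ‖x - (l * m) • z‖ ^ 2 := by
    rw [hx, hz, norm_diff_sq g k (l * m) (by rw [norm_mul, hl1, hm1, one_mul])]
    have := Complex.re_le_norm (l * m * trd g k)
    have habs : ‖l * m * trd g k‖ = ‖trd g k‖ := by
      rw [norm_mul, norm_mul, hl1, hm1]; ring
    rw [habs] at this
    unfold trd at this ⊢
    linarith
  have hmid : ‖l • y - (l * m) • z‖ = ‖y - m • z‖ := by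
    rw [mul_smul, ← smul_sub, norm_smul]
    have : ‖l‖ = 1 := hl1
    rw [this, one_mul]
  have key : Real.sqrt (2 * n - 2 * ‖trd g k‖)
      ≤ Real.sqrt (2 * n - 2 * ‖trd g h‖)
        + Real.sqrt (2 * n - 2 * ‖trd h k‖) := by
    calc Real.sqrt (2 * n - 2 * ‖trd g k‖)
        ≤ Real.sqrt (‖x - (l * m) • z‖ ^ 2) := Real.sqrt_le_sqrt h3
      _ = ‖x - (l * m) • z‖ := by rw [Real.sqrt_sq (norm_nonneg _)]
      _ ≤ ‖x - l • y‖ + ‖l • y - (l * m) • z‖ := norm_sub_le_norm_sub_add_norm_sub _ _ _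
      _ = Real.sqrt (2 * n - 2 * ‖trd g h‖)
          + Real.sqrt (2 * n - 2 * ‖trd h k‖) := by
          rw [hmid, ← h1, ← h2, Real.sqrt_sq (norm_nonneg _), Real.sqrt_sq (norm_nonneg _)]
  rw [sqrt_bridge hn, sqrt_bridge hn, sqrt_bridge hn] at key
  have hpos : 0 < Real.sqrt (2 * n) := by
    apply Real.sqrt_pos.2
    have : (1 : ℝ) ≤ n := by exact_mod_cast hn
    linarith
  nlinarith [key, hpos]

lemma udist_nonneg (g h : Matrix.unitaryGroup (Fin n) ℂ) : 0 ≤ udist n g h :=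
  Real.sqrt_nonneg _

lemma udist_self (g : Matrix.unitaryGroup (Fin n) ℂ) (hn : 1 ≤ n) : udist n g g = 0 := by
  rw [udist_eq]
  unfold trd
  rw [Matrix.UnitaryGroup.star_mul_self, Matrix.trace_one]
  have hn' : (n : ℝ) ≠ 0 := by positivity
  simp [Complex.norm_natCast, div_self hn']

lemma udist_mul_left (u g h : Matrix.unitaryGroup (Fin n) ℂ) :
    udist n (u * g) (u * h) = udist n g h := by
  have h1 : star ((u : Matrix (Fin n) (Fin n) ℂ) * (g : Matrix (Fin n) (Fin n) ℂ))
      * ((u : Matrix (Fin n) (Fin n) ℂ) * (h : Matrix (Fin n) (Fin n) ℂ))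
      = star (g : Matrix (Fin n) (Fin n) ℂ) * (h : Matrix (Fin n) (Fin n) ℂ) := by
    rw [star_mul, mul_assoc]
    rw [show star (u : Matrix (Fin n) (Fin n) ℂ)
        * ((u : Matrix (Fin n) (Fin n) ℂ) * (h : Matrix (Fin n) (Fin n) ℂ))
        = (h : Matrix (Fin n) (Fin n) ℂ) from by
      rw [← mul_assoc, Matrix.UnitaryGroup.star_mul_self, one_mul]]
  unfold udist
  simp only [Matrix.UnitaryGroup.mul_val, h1]

lemma udist_mul_right (u g h : Matrix.unitaryGroup (Fin n) ℂ) :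
    udist n (g * u) (h * u) = udist n g h := by
  have h1 : Matrix.trace (star ((g : Matrix (Fin n) (Fin n) ℂ) * (u : Matrix (Fin n) (Fin n) ℂ))
      * ((h : Matrix (Fin n) (Fin n) ℂ) * (u : Matrix (Fin n) (Fin n) ℂ)))
      = Matrix.trace (star (g : Matrix (Fin n) (Fin n) ℂ) * (h : Matrix (Fin n) (Fin n) ℂ)) := by
    rw [star_mul]
    rw [show star (u : Matrix (Fin n) (Fin n) ℂ) * star (g : Matrix (Fin n) (Fin n) ℂ)
        * ((h : Matrix (Fin n) (Fin n) ℂ) * (u : Matrix (Fin n) (Fin n) ℂ))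
        = star (u : Matrix (Fin n) (Fin n) ℂ) * (star (g : Matrix (Fin n) (Fin n) ℂ)
          * (h : Matrix (Fin n) (Fin n) ℂ)) * (u : Matrix (Fin n) (Fin n) ℂ) from by
      simp only [mul_assoc]]
    rw [Matrix.trace_mul_comm, ← mul_assoc, Unitary.mul_star_self_of_mem u.2, one_mul]
  unfold udist
  simp only [Matrix.UnitaryGroup.mul_val, h1]

set_option maxHeartbeats 1000000 in
lemma aux (hn : 1 ≤ n) : ∀ N (g h : Fin N → Matrix.unitaryGroup (Fin n) ℂ),
    udist n (List.ofFn g).prod (List.ofFn h).prod ≤ ∑ i, udist n (g i) (h i) := by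
  intro N
  induction N with
  | zero =>
    intro g h
    rw [List.ofFn_zero, List.prod_nil]
    simp only [Finset.univ_eq_empty, Finset.sum_empty]
    exact le_of_eq (udist_self 1 hn)
  | succ N ih =>
    intro g h
    rw [List.ofFn_succ, List.ofFn_succ, List.prod_cons, List.prod_cons, Fin.sum_univ_succ]
    have t1 := udist_triangle hn (g 0 * (List.ofFn fun i => g i.succ).prod)
      (h 0 * (List.ofFn fun i => g i.succ).prod)
      (h 0 * (List.ofFn fun i => h i.succ).prod)
    have t2 := udist_mul_right ((List.ofFn fun i => g i.succ).prod) (g 0) (h 0)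
    have t3 := udist_mul_left (h 0) ((List.ofFn fun i => g i.succ).prod)
      ((List.ofFn fun i => h i.succ).prod)
    have t4 := ih (fun i => g i.succ) (fun i => h i.succ)
    rw [t2, t3] at t1
    exact t1.trans (by linarith)

end UdistAux

/-- For unitaries `g₁,…,g_N` and `h₁,…,h_N` in `U(n)`,
`d(g₁⋯g_N, h₁⋯h_N) ≤ Σᵢ d(gᵢ,hᵢ)`; in particular, if `d(gᵢ,hᵢ) ≤ ε` for all
`i`, then `d(g₁⋯g_N, h₁⋯h_N) ≤ N·ε`. -/
theorem udist_prod_le (n N : ℕ) (hn : 1 ≤ n) (hN : 1 ≤ N)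
    (g h : Fin N → Matrix.unitaryGroup (Fin n) ℂ) :
    udist n (List.ofFn g).prod (List.ofFn h).prod ≤ ∑ i, udist n (g i) (h i) ∧
    ∀ ε : ℝ, (∀ i, udist n (g i) (h i) ≤ ε) →
      udist n (List.ofFn g).prod (List.ofFn h).prod ≤ N * ε := by
  have hmain := UdistAux.aux hn N g h
  refine ⟨hmain, fun ε hε => hmain.trans ?_⟩
  calc ∑ i, udist n (g i) (h i) ≤ ∑ _i : Fin N, ε := Finset.sum_le_sum fun i _ => hε i
    _ = N * ε := by simp [Finset.sum_const, nsmul_eq_mul]
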